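/- arXiv:2008.07477 — 3 statements merged into one kernel-verified Lean document; each statement's English description precedes it below -/
import Mathlib

section
/- Let H : ℝ → B(𝓗) be a differentiable family of self-adjoint operators on a Hilbert space 𝓗, and for each s let E_s be the spectral projection of H_s associated with a part of the spectrum separated from the rest by a uniform gap, expressed via the Riesz projection E_s = (2πi)⁻¹ ∮_Γ (ζ − H_s)⁻¹ dζ over a fixed contour Γ enclosing that spectral part for all s. Then s ↦ E_s is differentiable and ∂_s E_s = (2πi)⁻¹ ∮_Γ (ζ − H_s)⁻¹ (∂_s H_s) (ζ − H_s)⁻¹ dζ. -/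
open MeasureTheory Metric

/-- Second resolvent identity in a ring. -/
lemma aux_inv_sub_inv {R : Type*} [Ring R] {a b : R} (ha : IsUnit a) (hb : IsUnit b) :
    Ring.inverse a - Ring.inverse b = Ring.inverse a * (b - a) * Ring.inverse b := by
  rw [mul_sub, sub_mul, mul_assoc, Ring.mul_inverse_cancel b hb, mul_one,
    Ring.inverse_mul_cancel a ha, one_mul]

/-- Differentiation under the interval integral, with a Lipschitz-from-the-base-point bound. -/
lemma aux_hasDerivAt_intervalIntegral {E : Type*} [NormedAddCommGroup E] [NormedSpace ℝ E] [CompleteSpace E]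
    {F : ℝ → ℝ → E} {F' : ℝ → E} {x₀ : ℝ} {bound : ℝ → ℝ} {ε : ℝ}
    (ε_pos : 0 < ε)
    (hF_meas : ∀ x, AEStronglyMeasurable (F x) (volume.restrict (Set.Ioc (0:ℝ) 1)))
    (hF_int : Integrable (F x₀) (volume.restrict (Set.Ioc (0:ℝ) 1)))
    (hF'_meas : AEStronglyMeasurable F' (volume.restrict (Set.Ioc (0:ℝ) 1)))
    (hF'_int : Integrable F' (volume.restrict (Set.Ioc (0:ℝ) 1)))
    (h_lip : ∀ᵐ t ∂(volume.restrict (Set.Ioc (0:ℝ) 1)), ∀ x ∈ ball x₀ ε,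
      ‖F x t - F x₀ t‖ ≤ bound t * ‖x - x₀‖)
    (bound_int : Integrable bound (volume.restrict (Set.Ioc (0:ℝ) 1)))
    (h_diff : ∀ᵐ t ∂(volume.restrict (Set.Ioc (0:ℝ) 1)), HasDerivAt (F · t) (F' t) x₀) :
    HasDerivAt (fun x => ∫ t in (0:ℝ)..1, F x t) (∫ t in (0:ℝ)..1, F' t) x₀ := by
  have hrw : ∀ (g : ℝ → E), (∫ t in (0:ℝ)..1, g t) = ∫ t in Set.Ioc (0:ℝ) 1, g t := fun g =>
    intervalIntegral.integral_of_le zero_le_one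
  simp only [hrw]
  set μ := volume.restrict (Set.Ioc (0:ℝ) 1)
  set L : E →L[ℝ] ℝ →L[ℝ] E := ContinuousLinearMap.smulRightL ℝ ℝ E 1 with hL
  replace h_diff : ∀ᵐ t ∂μ, HasFDerivAt (F · t) (L (F' t)) x₀ :=
    h_diff.mono fun t ht => ht.hasFDerivAt
  have hm : AEStronglyMeasurable (L ∘ F') μ := L.continuous.comp_aestronglyMeasurable hF'_meas
  obtain ⟨hLF'_int, key⟩ := hasFDerivAt_integral_of_dominated_loc_of_lip' (ball_mem_nhds x₀ ε_pos)
    (fun x _ => hF_meas x) hF_int hm h_lip bound_int h_diff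
  have hcomm : (∫ t, L (F' t) ∂μ) = L (∫ t, F' t ∂μ) :=
    ContinuousLinearMap.integral_comp_comm L hF'_int
  rw [hasDerivAt_iff_hasFDerivAt]
  rw [Function.comp_def, hcomm] at key
  refine key.congr_fderiv ?_
  rw [hL]; ext; simp

set_option maxHeartbeats 1000000 in
set_option synthInstance.maxHeartbeats 400000 in
/-- Differentiability of Riesz spectral projections. If `H s` is a
norm-differentiable family of bounded self-adjoint operators and `γ` is a closed contour in
the resolvent set of every `H s`, then `E s = (2πi)⁻¹ ∮_γ (ζ - H s)⁻¹ dζ` is differentiable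
with `∂ₛ E s = (2πi)⁻¹ ∮_γ (ζ - H s)⁻¹ (∂ₛ H s) (ζ - H s)⁻¹ dζ`. -/
theorem stmt5 {𝓗 : Type*} [NormedAddCommGroup 𝓗] [InnerProductSpace ℂ 𝓗] [CompleteSpace 𝓗]
    (H H' : ℝ → 𝓗 →L[ℂ] 𝓗)
    (hH : ∀ s, HasDerivAt H (H' s) s)
    (hsa : ∀ s, IsSelfAdjoint (H s))
    (γ γ' : ℝ → ℂ)
    (hγ : ∀ t, HasDerivAt γ (γ' t) t)
    (hγ' : Continuous γ')
    (hclosed : γ 1 = γ 0)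
    (hres : ∀ s t, IsUnit (γ t • (1 : 𝓗 →L[ℂ] 𝓗) - H s)) :
    ∀ s : ℝ, HasDerivAt
      (fun r : ℝ => (2 * (Real.pi : ℂ) * Complex.I)⁻¹ •
        ∫ t in (0:ℝ)..1, γ' t • Ring.inverse (γ t • (1 : 𝓗 →L[ℂ] 𝓗) - H r))
      ((2 * (Real.pi : ℂ) * Complex.I)⁻¹ •
        ∫ t in (0:ℝ)..1, γ' t •
          (Ring.inverse (γ t • (1 : 𝓗 →L[ℂ] 𝓗) - H s) ∘L H' s ∘L
            Ring.inverse (γ t • (1 : 𝓗 →L[ℂ] 𝓗) - H s))) s := by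
  intro s
  set A : ℝ → ℝ → (𝓗 →L[ℂ] 𝓗) := fun x t => γ t • (1 : 𝓗 →L[ℂ] 𝓗) - H x with hAdef
  set R : ℝ → ℝ → (𝓗 →L[ℂ] 𝓗) := fun x t => Ring.inverse (A x t) with hRdef
  -- basic continuity
  have contH : Continuous H := by
    rw [continuous_iff_continuousAt]; exact fun x => (hH x).continuousAt
  have contγ : Continuous γ := by
    rw [continuous_iff_continuousAt]; exact fun t => (hγ t).continuousAt
  have contA : Continuous (fun p : ℝ × ℝ => A p.1 p.2) :=
    ((contγ.comp continuous_snd).smul continuous_const).sub (contH.comp continuous_fst)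
  have contR : Continuous (fun p : ℝ × ℝ => R p.1 p.2) := by
    rw [continuous_iff_continuousAt]
    intro p
    obtain ⟨u, hu⟩ := hres p.1 p.2
    have hu' : (↑u : 𝓗 →L[ℂ] 𝓗) = A p.1 p.2 := hu
    have h1 : ContinuousAt Ring.inverse (A p.1 p.2) := by
      rw [← hu']; exact NormedRing.inverse_continuousAt u
    exact ContinuousAt.comp (g := Ring.inverse) (f := fun p : ℝ × ℝ => A p.1 p.2)
      h1 contA.continuousAt
  -- uniform bound on the resolvent near s
  have hKcomp : IsCompact ((Set.Icc (s-1) (s+1)) ×ˢ (Set.Icc (0:ℝ) 1)) :=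
    isCompact_Icc.prod isCompact_Icc
  obtain ⟨C₀, hC₀⟩ := hKcomp.exists_bound_of_continuousOn contR.continuousOn
  set C : ℝ := max C₀ 0 with hCdef
  have hCnn : 0 ≤ C := le_max_right _ _
  have hC : ∀ x ∈ Set.Icc (s-1) (s+1), ∀ t ∈ Set.Icc (0:ℝ) 1, ‖R x t‖ ≤ C := fun x hx t ht =>
    (hC₀ (x, t) (Set.mk_mem_prod hx ht)).trans (le_max_left _ _)
  -- local bound on H near s
  have hHB : ∀ᶠ x in nhds s, ‖H x - H s‖ ≤ (‖H' s‖ + 1) * ‖x - s‖ := by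
    have h := (hasDerivAt_iff_isLittleO.mp (hH s)).def one_pos
    filter_upwards [h] with x hx
    calc ‖H x - H s‖ = ‖(H x - H s - (x - s) • H' s) + (x - s) • H' s‖ := by abel_nf
      _ ≤ ‖H x - H s - (x - s) • H' s‖ + ‖(x - s) • H' s‖ := norm_add_le _ _
      _ ≤ 1 * ‖x - s‖ + ‖x - s‖ * ‖H' s‖ := by
          rw [norm_smul, Real.norm_eq_abs]
          exact add_le_add hx le_rfl
      _ = (‖H' s‖ + 1) * ‖x - s‖ := by ring
  obtain ⟨δ, hδpos, hδ⟩ := Metric.eventually_nhds_iff.mp hHB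
  set ε : ℝ := min δ 1 with hεdef
  have hεpos : 0 < ε := lt_min hδpos one_pos
  have hball : ∀ x ∈ Metric.ball s ε, x ∈ Set.Icc (s-1) (s+1) := by
    intro x hx
    rw [Metric.mem_ball, Real.dist_eq] at hx
    have h1 : |x - s| < 1 := hx.trans_le (min_le_right _ _)
    rw [abs_lt] at h1
    constructor <;> linarith [h1.1, h1.2]
  have hballH : ∀ x ∈ Metric.ball s ε, ‖H x - H s‖ ≤ (‖H' s‖ + 1) * ‖x - s‖ := by
    intro x hx
    rw [Metric.mem_ball] at hx
    exact hδ (hx.trans_le (min_le_left _ _))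
  -- the integrand and its derivative
  set F : ℝ → ℝ → (𝓗 →L[ℂ] 𝓗) := fun x t => γ' t • R x t with hF
  set G : ℝ → (𝓗 →L[ℂ] 𝓗) := fun t => γ' t • (R s t ∘L H' s ∘L R s t) with hG
  have contRt : ∀ x, Continuous (fun t => R x t) := fun x =>
    contR.comp (continuous_const.prodMk continuous_id)
  have contFx : ∀ x, Continuous (F x) := fun x => hγ'.smul (contRt x)
  have contG : Continuous G := by
    have h1 : Continuous (fun t => R s t ∘L H' s ∘L R s t) := by
      simp only [← ContinuousLinearMap.mul_def]
      exact (contRt s).mul (continuous_const.mul (contRt s))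
    exact hγ'.smul h1
  -- derivative of the integrand
  have h_diff : ∀ t : ℝ, HasDerivAt (fun x => F x t) (G t) s := by
    intro t
    have hA' : HasDerivAt (fun x => A x t) (-(H' s)) s := (hH s).const_sub _
    obtain ⟨u, hu⟩ := hres s t
    have hu' : (↑u : 𝓗 →L[ℂ] 𝓗) = A s t := hu
    have hfd : HasFDerivAt Ring.inverse
        (-ContinuousLinearMap.mulLeftRight ℝ (𝓗 →L[ℂ] 𝓗) ↑u⁻¹ ↑u⁻¹) (A s t) := by
      rw [← hu']; exact hasFDerivAt_ringInverse (𝕜 := ℝ) u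
    have hcomp0 : HasDerivAt (Ring.inverse ∘ fun x => A x t)
        ((-ContinuousLinearMap.mulLeftRight ℝ (𝓗 →L[ℂ] 𝓗) ↑u⁻¹ ↑u⁻¹) (-(H' s))) s :=
      HasFDerivAt.comp_hasDerivAt (f := fun x => A x t) s hfd hA'
    have hcomp : HasDerivAt (fun x => R x t)
        ((-ContinuousLinearMap.mulLeftRight ℝ (𝓗 →L[ℂ] 𝓗) ↑u⁻¹ ↑u⁻¹) (-(H' s))) s := hcomp0
    have hinv : (↑u⁻¹ : 𝓗 →L[ℂ] 𝓗) = R s t := by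
      rw [hRdef]; simp only [← hu', Ring.inverse_unit]
    have hval : ((-ContinuousLinearMap.mulLeftRight ℝ (𝓗 →L[ℂ] 𝓗) ↑u⁻¹ ↑u⁻¹) (-(H' s)))
        = R s t ∘L H' s ∘L R s t := by
      simp only [ContinuousLinearMap.neg_apply, ContinuousLinearMap.mulLeftRight_apply, hinv,
        mul_neg, neg_mul, neg_neg, ← ContinuousLinearMap.mul_def, mul_assoc]
    rw [hval] at hcomp
    exact hcomp.const_smul (γ' t)
  -- Lipschitz estimate from the base point
  have h_lip : ∀ t ∈ Set.Icc (0:ℝ) 1, ∀ x ∈ Metric.ball s ε,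
      ‖F x t - F s t‖ ≤ (‖γ' t‖ * (C * ((‖H' s‖ + 1) * C))) * ‖x - s‖ := by
    intro t ht x hx
    have hrx : ‖R x t‖ ≤ C := hC x (hball x hx) t ht
    have hrs : ‖R s t‖ ≤ C := hC s (by constructor <;> linarith) t ht
    have hres_id : R x t - R s t = R x t * (H x - H s) * R s t := by
      have h0 := aux_inv_sub_inv (hres x t) (hres s t)
      have h1 : (γ t • (1 : 𝓗 →L[ℂ] 𝓗) - H s) - (γ t • (1 : 𝓗 →L[ℂ] 𝓗) - H x) = H x - H s := by
        abel
      rw [h1] at h0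
      exact h0
    calc ‖F x t - F s t‖ = ‖γ' t‖ * ‖R x t - R s t‖ := by
          rw [hF]; simp only [← smul_sub, norm_smul]
      _ = ‖γ' t‖ * ‖R x t * (H x - H s) * R s t‖ := by rw [hres_id]
      _ ≤ ‖γ' t‖ * (‖R x t‖ * ‖H x - H s‖ * ‖R s t‖) := by
          gcongr
          exact (norm_mul_le _ _).trans (by gcongr; exact norm_mul_le _ _)
      _ ≤ ‖γ' t‖ * (C * (((‖H' s‖ + 1) * ‖x - s‖)) * C) := by
          have hH1 : ‖H x - H s‖ ≤ (‖H' s‖ + 1) * ‖x - s‖ := hballH x hx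
          gcongr <;> first
            | exact norm_nonneg _
            | exact (norm_nonneg _).trans hrx
            | positivity
            | assumption
      _ = (‖γ' t‖ * (C * ((‖H' s‖ + 1) * C))) * ‖x - s‖ := by ring
  -- apply differentiation under the integral sign
  have key : HasDerivAt (fun x => ∫ t in (0:ℝ)..1, F x t) (∫ t in (0:ℝ)..1, G t) s := by
    apply aux_hasDerivAt_intervalIntegral (bound := fun t => ‖γ' t‖ * (C * ((‖H' s‖ + 1) * C)))
      hεpos
    · exact fun x => ((contFx x).aestronglyMeasurable).restrict
    · exact (contFx s).integrableOn_Ioc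
    · exact contG.aestronglyMeasurable.restrict
    · exact contG.integrableOn_Ioc
    · exact (ae_restrict_iff' measurableSet_Ioc).2 (Filter.Eventually.of_forall
        fun t ht => h_lip t (Set.Ioc_subset_Icc_self ht))
    · exact (hγ'.norm.mul continuous_const).integrableOn_Ioc
    · exact Filter.Eventually.of_forall fun t => h_diff t
  exact key.const_smul ((2 * (Real.pi : ℂ) * Complex.I)⁻¹)
end

section
/- Combes–Thomas type corollary: let A be a bounded self-adjoint operator on ℓ²(ℤᵈ) ⊗ ℂⁿ and z ∈ ℂ with dist(z, spec(A)) ≥ g/2 > 0, and suppose S(A, μ) := sup_x Σ_y (e^{μ|x−y|^ε} − 1)|⟨e_x, A e_y⟩| is finite for some μ > 0 and ε ∈ (0,1]. Then the matrix elements of the resolvent satisfy |⟨e_x, (z − A)⁻¹ e_y⟩| ≤ 4 g⁻¹ exp(−μ min{1, g/(4 S(A, μ))} |x − y|^ε). -/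
open scoped ENNReal NNReal ComplexConjugate

section CTAux
variable {H : Type*} [NormedAddCommGroup H] [InnerProductSpace ℂ H] [CompleteSpace H]


private lemma ct_min_lip (a b c : ℝ) : |min a c - min b c| ≤ |a - b| := by
  rw [abs_sub_le_iff]
  constructor
  · have h1 : a ≤ b + |a - b| := by
      have := le_abs_self (a - b); linarith
    have h2 : min a c ≤ min (b + |a - b|) (c + |a - b|) :=
      min_le_min h1 (by linarith [abs_nonneg (a - b)])
    rw [min_add_add_right] at h2
    linarith
  · have h1 : b ≤ a + |a - b| := by
      have := neg_abs_le (a - b); linarith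
    have h2 : min b c ≤ min (a + |a - b|) (c + |a - b|) :=
      min_le_min h1 (by linarith [abs_nonneg (a - b)])
    rw [min_add_add_right] at h2
    linarith

private lemma ct_rpow_subadd {ε : ℝ} (hε0 : 0 < ε) (hε1 : ε ≤ 1) (a c : ℝ) (ha : 0 ≤ a)
    (hc : 0 ≤ c) : (a + c) ^ ε ≤ a ^ ε + c ^ ε := by
  have h := NNReal.rpow_add_le_add_rpow a.toNNReal c.toNNReal hε0.le hε1
  have hadd : ((a.toNNReal + c.toNNReal : ℝ≥0) : ℝ) = a + c := by
    push_cast [Real.coe_toNNReal a ha, Real.coe_toNNReal c hc]; ring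
  calc (a + c) ^ ε = (((a.toNNReal + c.toNNReal : ℝ≥0) : ℝ)) ^ ε := by rw [hadd]
    _ = (((a.toNNReal + c.toNNReal) ^ ε : ℝ≥0) : ℝ) := by
        rw [NNReal.coe_rpow]
    _ ≤ ((a.toNNReal ^ ε + c.toNNReal ^ ε : ℝ≥0) : ℝ) := by exact_mod_cast h
    _ = a ^ ε + c ^ ε := by
        push_cast [NNReal.coe_rpow, Real.coe_toNNReal a ha, Real.coe_toNNReal c hc]; ring

private lemma ct_abs_exp_sub_one (t : ℝ) : |Real.exp t - 1| ≤ Real.exp |t| - 1 := by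
  rcases le_or_gt 0 t with h | h
  · rw [abs_of_nonneg h, abs_of_nonneg (by linarith [Real.one_le_exp h] : (0:ℝ) ≤ Real.exp t - 1)]
  · rw [abs_of_neg h, abs_of_nonpos (by nlinarith [Real.exp_le_one_iff.2 h.le] : Real.exp t - 1 ≤ 0)]
    have h1 := Real.add_one_le_exp t
    have h2 := Real.add_one_le_exp (-t)
    linarith


lemma resolvent_unit (T : H →L[ℂ] H) (hT : IsStarNormal T) (z : ℂ) (g : ℝ) (hg : 0 < g)
    (hz : ∀ w ∈ spectrum ℂ T, g / 2 ≤ ‖z - w‖) :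
    ∃ u : (H →L[ℂ] H)ˣ, ((u : H →L[ℂ] H) = z • (1 : H →L[ℂ] H) - T ∧
      ‖((u⁻¹ : (H →L[ℂ] H)ˣ) : H →L[ℂ] H)‖ ≤ 2 / g) := by
  have hne : ∀ t ∈ spectrum ℂ T, z - t ≠ 0 := by
    intro t ht h
    have := hz t ht
    rw [h, norm_zero] at this
    linarith
  have hcont : ContinuousOn (fun t : ℂ => (z - t)⁻¹) (spectrum ℂ T) :=
    ContinuousOn.inv₀ (Continuous.continuousOn (by continuity)) hne
  set r := cfc (fun t : ℂ => (z - t)⁻¹) T with hr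
  have hsub : z • (1 : H →L[ℂ] H) - T = cfc (fun t : ℂ => z - t) T := by
    have h1 : cfc (fun t : ℂ => z - t) T
        = cfc (fun _ : ℂ => z) T - cfc (fun t : ℂ => t) T := cfc_sub _ _ T
    rw [h1, cfc_const z T, cfc_id' ℂ T, Algebra.algebraMap_eq_smul_one]
  have key : ∀ t ∈ spectrum ℂ T, ((z - t) * (z - t)⁻¹ : ℂ) = 1 := fun t ht =>
    mul_inv_cancel₀ (hne t ht)
  have hmul1 : (z • (1 : H →L[ℂ] H) - T) * r = 1 := by
    rw [hsub, hr, ← cfc_mul _ _ T (by fun_prop) hcont, cfc_congr key]; exact cfc_const 1 T |>.trans (map_one _)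
  have hmul2 : r * (z • (1 : H →L[ℂ] H) - T) = 1 := by
    have key2 : ∀ t ∈ spectrum ℂ T, ((z - t)⁻¹ * (z - t) : ℂ) = 1 := fun t ht =>
      inv_mul_cancel₀ (hne t ht)
    rw [hsub, hr, ← cfc_mul _ _ T hcont (by fun_prop), cfc_congr key2]; exact cfc_const 1 T |>.trans (map_one _)
  refine ⟨⟨z • (1 : H →L[ℂ] H) - T, r, hmul1, hmul2⟩, rfl, ?_⟩
  show ‖r‖ ≤ 2 / g
  refine norm_cfc_le (by positivity) fun t ht => ?_
  rw [norm_inv]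
  calc ‖z - t‖⁻¹ ≤ (g/2)⁻¹ := inv_anti₀ (by linarith) (hz t ht)
  _ = 2 / g := by field_simp

lemma diag_exists {ι : Type*} (b : HilbertBasis ι ℂ H) (f : ι → ℂ) (C : ℝ) (hC : 0 ≤ C)
    (hf : ∀ i, ‖f i‖ ≤ C) :
    ∃ D : H →L[ℂ] H, (‖D‖ ≤ C ∧ ∀ ψ i, b.repr (D ψ) i = f i * b.repr ψ i) := by
  have h2 : (2 : ℝ≥0∞).toReal = 2 := by simp
  have hsummable : ∀ x : lp (fun _ : ι => ℂ) 2, Summable fun i => ‖x i‖ ^ (2:ℝ) := by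
    intro x
    have := (lp.memℓp x).summable (p := 2) (by rw [h2]; norm_num)
    rwa [h2] at this
  have mem : ∀ x : lp (fun _ : ι => ℂ) 2, Memℓp (fun i => f i * x i) (2 : ℝ≥0∞) := by
    intro x
    apply memℓp_gen
    rw [h2]
    refine Summable.of_nonneg_of_le (fun i => by positivity) (fun i => ?_)
      (((hsummable x).mul_left (C ^ (2:ℝ))))
    calc ‖f i * x i‖ ^ (2:ℝ) ≤ (C * ‖x i‖) ^ (2:ℝ) := by
          apply Real.rpow_le_rpow (norm_nonneg _) ?_ (by norm_num)
          rw [norm_mul]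
          exact mul_le_mul_of_nonneg_right (hf i) (norm_nonneg _)
      _ = C ^ (2:ℝ) * ‖x i‖ ^ (2:ℝ) := Real.mul_rpow hC (norm_nonneg _)
  have memfun : ∀ ψ : H, Memℓp (fun i => f i * b.repr ψ i) (2 : ℝ≥0∞) := fun ψ => mem _
  set Dlin : H →ₗ[ℂ] H :=
    { toFun := fun ψ => b.repr.symm ⟨fun i => f i * b.repr ψ i, memfun ψ⟩
      map_add' := by
        intro ψ φ
        beta_reduce
        rw [← map_add]
        congr 1
        apply lp.ext
        funext i
        simp [lp.coeFn_add, mul_add]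
        rfl
      map_smul' := by
        intro c ψ
        show b.repr.symm ⟨fun i => f i * b.repr (c • ψ) i, memfun _⟩
          = c • b.repr.symm ⟨fun i => f i * b.repr ψ i, memfun _⟩
        rw [← map_smul]
        congr 1
        apply lp.ext
        funext i
        simp only [lp.coeFn_smul, Pi.smul_apply, map_smul, smul_eq_mul]
        ring } with hDlin
  have hbound : ∀ ψ, ‖Dlin ψ‖ ≤ C * ‖ψ‖ := by
    intro ψ
    have h1 : ‖Dlin ψ‖ = ‖(⟨fun i => f i * b.repr ψ i, memfun ψ⟩ : lp (fun _ : ι => ℂ) 2)‖ := by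
      rw [hDlin]; exact b.repr.symm.norm_map _
    rw [h1]
    apply lp.norm_le_of_tsum_le (by rw [h2]; norm_num) (by positivity)
    rw [h2]
    have hψ : ‖ψ‖ ^ (2:ℝ) = ∑' i, ‖b.repr ψ i‖ ^ (2:ℝ) := by
      rw [← b.repr.norm_map ψ]
      have := lp.norm_rpow_eq_tsum (p := 2) (by rw [h2]; norm_num) (b.repr ψ)
      rwa [h2] at this
    calc (∑' i, ‖f i * b.repr ψ i‖ ^ (2:ℝ))
        ≤ ∑' i, C ^ (2:ℝ) * ‖b.repr ψ i‖ ^ (2:ℝ) := by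
          apply Summable.tsum_le_tsum _ _ ((hsummable (b.repr ψ)).mul_left _)
          · intro i
            calc ‖f i * b.repr ψ i‖ ^ (2:ℝ) ≤ (C * ‖b.repr ψ i‖) ^ (2:ℝ) := by
                  apply Real.rpow_le_rpow (norm_nonneg _) ?_ (by norm_num)
                  rw [norm_mul]
                  exact mul_le_mul_of_nonneg_right (hf i) (norm_nonneg _)
              _ = C ^ (2:ℝ) * ‖b.repr ψ i‖ ^ (2:ℝ) := Real.mul_rpow hC (norm_nonneg _)
          · refine Summable.of_nonneg_of_le (fun i => by positivity) (fun i => ?_)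
              (((hsummable (b.repr ψ)).mul_left (C ^ (2:ℝ))))
            calc ‖f i * b.repr ψ i‖ ^ (2:ℝ) ≤ (C * ‖b.repr ψ i‖) ^ (2:ℝ) := by
                  apply Real.rpow_le_rpow (norm_nonneg _) ?_ (by norm_num)
                  rw [norm_mul]
                  exact mul_le_mul_of_nonneg_right (hf i) (norm_nonneg _)
              _ = C ^ (2:ℝ) * ‖b.repr ψ i‖ ^ (2:ℝ) := Real.mul_rpow hC (norm_nonneg _)
      _ = C ^ (2:ℝ) * ∑' i, ‖b.repr ψ i‖ ^ (2:ℝ) := tsum_mul_left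
      _ = (C * ‖ψ‖) ^ (2:ℝ) := by rw [← hψ, ← Real.mul_rpow hC (norm_nonneg _)]
  refine ⟨Dlin.mkContinuous C hbound, Dlin.mkContinuous_norm_le hC hbound, fun ψ i => ?_⟩
  show b.repr (Dlin ψ) i = f i * b.repr ψ i
  rw [hDlin]
  simp only [LinearMap.coe_mk, AddHom.coe_mk]
  rw [LinearIsometryEquiv.apply_symm_apply]

lemma schur_bound {ι : Type*} (b : HilbertBasis ι ℂ H) (T : H →L[ℂ] H) (k : ι → ι → ℝ)
    (hknn : ∀ u v, 0 ≤ k u v)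
    (hk : ∀ u v, ‖(inner ℂ (b u) (T (b v)) : ℂ)‖ ≤ k u v)
    (c : ℝ) (hc : 0 ≤ c)
    (hrowsum : ∀ u, Summable (k u)) (hrow : ∀ u, ∑' v, k u v ≤ c)
    (hcolsum : ∀ v, Summable (fun u => k u v)) (hcol : ∀ v, ∑' u, k u v ≤ c) :
    ‖T‖ ≤ c := by
  have h2 : (2 : ℝ≥0∞).toReal = 2 := by simp
  refine T.opNorm_le_bound hc (fun ψ => ?_)
  set Ψ : ι → ℝ := fun v => ‖b.repr ψ v‖ with hΨ
  have hΨnn : ∀ v, 0 ≤ Ψ v := fun v => norm_nonneg _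
  have hΨsum : Summable fun v => Ψ v ^ (2:ℝ) := by
    have := (lp.memℓp (b.repr ψ)).summable (p := 2) (by rw [h2]; norm_num)
    rwa [h2] at this
  have hΨle : ∀ v, Ψ v ≤ ‖ψ‖ := by
    intro v
    have := lp.norm_apply_le_norm (p := 2) two_ne_zero (b.repr ψ) v
    rwa [b.repr.norm_map ψ] at this
  have hψnorm : ∑' v, Ψ v ^ (2:ℝ) = ‖ψ‖ ^ (2:ℝ) := by
    rw [← b.repr.norm_map ψ]
    have := lp.norm_rpow_eq_tsum (p := 2) (by rw [h2]; norm_num) (b.repr ψ)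
    rw [h2] at this
    exact this.symm
  -- matrix expansion
  have hhas : ∀ u, HasSum (fun v => b.repr ψ v * (inner ℂ (b u) (T (b v)) : ℂ))
      (inner ℂ (b u) (T ψ) : ℂ) := by
    intro u
    have h1 := ((b.hasSum_repr ψ).mapL T).mapL (innerSL ℂ (b u))
    simpa [map_smul, inner_smul_right] using h1
  -- row bound with Cauchy-Schwarz
  set G : ι → ℝ := fun u => ∑' v, k u v * Ψ v ^ (2:ℝ) with hG
  have hGrowsum : ∀ u, Summable fun v => k u v * Ψ v ^ (2:ℝ) := by
    intro u
    refine Summable.of_nonneg_of_le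
      (fun v => mul_nonneg (hknn u v) (Real.rpow_nonneg (hΨnn v) _)) (fun v => ?_)
      ((hrowsum u).mul_right (‖ψ‖ ^ (2:ℝ)))
    exact mul_le_mul_of_nonneg_left
      (Real.rpow_le_rpow (hΨnn v) (hΨle v) (by norm_num)) (hknn u v)
  have hGnn : ∀ u, 0 ≤ G u := fun u => tsum_nonneg (fun v => mul_nonneg (hknn u v) (Real.rpow_nonneg (hΨnn v) _))
  have hGle : ∀ u, G u ≤ c * ‖ψ‖ ^ (2:ℝ) := by
    intro u
    calc G u ≤ ∑' v, k u v * ‖ψ‖ ^ (2:ℝ) := by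
          refine Summable.tsum_le_tsum (fun v => ?_) (hGrowsum u) ((hrowsum u).mul_right _)
          exact mul_le_mul_of_nonneg_left
            (Real.rpow_le_rpow (hΨnn v) (hΨle v) (by norm_num)) (hknn u v)
      _ = (∑' v, k u v) * ‖ψ‖ ^ (2:ℝ) := tsum_mul_right
      _ ≤ c * ‖ψ‖ ^ (2:ℝ) := by
          exact mul_le_mul_of_nonneg_right (hrow u) (by positivity)
  have hFsqle : ∀ u, ‖(inner ℂ (b u) (T ψ) : ℂ)‖ ^ (2:ℝ) ≤ c * G u := by
    intro u
    have hsum1 : Summable fun v => k u v * Ψ v :=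
      Summable.of_nonneg_of_le (fun v => mul_nonneg (hknn u v) (hΨnn v))
        (fun v => mul_le_mul_of_nonneg_left (hΨle v) (hknn u v))
        ((hrowsum u).mul_right ‖ψ‖)
    have hb1 : ‖(inner ℂ (b u) (T ψ) : ℂ)‖ ≤ ∑' v, k u v * Ψ v := by
      rw [← (hhas u).tsum_eq]
      refine tsum_of_norm_bounded hsum1.hasSum (fun v => ?_)
      rw [norm_mul]
      calc ‖b.repr ψ v‖ * ‖(inner ℂ (b u) (T (b v)) : ℂ)‖ ≤ Ψ v * k u v :=
            mul_le_mul_of_nonneg_left (hk u v) (hΨnn v)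
        _ = k u v * Ψ v := mul_comm _ _
    have hconj : (2:ℝ).HolderConjugate 2 := by
      exact Real.HolderConjugate.two_two
    have hsq : ∀ x : ℝ, 0 ≤ x → Real.sqrt x ^ (2:ℝ) = x := fun x hx => by
      rw [Real.rpow_two, Real.sq_sqrt hx]
    have hf_sum : Summable fun v => Real.sqrt (k u v) ^ (2:ℝ) := by
      refine (hrowsum u).congr (fun v => ?_)
      rw [hsq _ (hknn u v)]
    have hg_sum : Summable fun v => (Real.sqrt (k u v) * Ψ v) ^ (2:ℝ) := by
      refine (hGrowsum u).congr (fun v => ?_)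
      rw [Real.mul_rpow (Real.sqrt_nonneg _) (hΨnn v), hsq _ (hknn u v)]
    have hcs := Real.inner_le_Lp_mul_Lq_tsum_of_nonneg hconj
      (fun v => Real.sqrt_nonneg (k u v))
      (fun v => mul_nonneg (Real.sqrt_nonneg _) (hΨnn v)) hf_sum hg_sum
    have hlhs : (∑' v, Real.sqrt (k u v) * (Real.sqrt (k u v) * Ψ v)) = ∑' v, k u v * Ψ v := by
      refine tsum_congr (fun v => ?_)
      rw [← mul_assoc, Real.mul_self_sqrt (hknn u v)]
    have hr1 : (∑' v, Real.sqrt (k u v) ^ (2:ℝ)) = ∑' v, k u v :=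
      tsum_congr (fun v => hsq _ (hknn u v))
    have hr2 : (∑' v, (Real.sqrt (k u v) * Ψ v) ^ (2:ℝ)) = G u := by
      refine tsum_congr (fun v => ?_)
      rw [Real.mul_rpow (Real.sqrt_nonneg _) (hΨnn v), hsq _ (hknn u v)]
    rw [hlhs, hr1, hr2] at hcs
    have hb2 : ‖(inner ℂ (b u) (T ψ) : ℂ)‖ ≤ c ^ ((1:ℝ)/2) * G u ^ ((1:ℝ)/2) := by
      refine hb1.trans (hcs.trans ?_)
      have : (∑' v, k u v) ^ ((1:ℝ)/2) ≤ c ^ ((1:ℝ)/2) :=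
        Real.rpow_le_rpow (tsum_nonneg (fun v => hknn u v)) (hrow u) (by norm_num)
      exact mul_le_mul_of_nonneg_right this (Real.rpow_nonneg (hGnn u) _)
    calc ‖(inner ℂ (b u) (T ψ) : ℂ)‖ ^ (2:ℝ)
        ≤ (c ^ ((1:ℝ)/2) * G u ^ ((1:ℝ)/2)) ^ (2:ℝ) :=
          Real.rpow_le_rpow (norm_nonneg _) hb2 (by norm_num)
      _ = c * G u := by
          rw [Real.mul_rpow (Real.rpow_nonneg hc _) (Real.rpow_nonneg (hGnn u) _),
            ← Real.rpow_mul hc, ← Real.rpow_mul (hGnn u)]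
          norm_num
  -- sum over u
  have hTψ : ‖T ψ‖ ^ (2:ℝ) = ∑' u, ‖(inner ℂ (b u) (T ψ) : ℂ)‖ ^ (2:ℝ) := by
    rw [← b.repr.norm_map (T ψ)]
    have := lp.norm_rpow_eq_tsum (p := 2) (by rw [h2]; norm_num) (b.repr (T ψ))
    rw [h2] at this
    rw [this]
    exact tsum_congr (fun u => by rw [b.repr_apply_apply])
  have hFsum : Summable fun u => ‖(inner ℂ (b u) (T ψ) : ℂ)‖ ^ (2:ℝ) := by
    have := (lp.memℓp (b.repr (T ψ))).summable (p := 2) (by rw [h2]; norm_num)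
    rw [h2] at this
    exact this.congr (fun u => by rw [b.repr_apply_apply])
  have hmain : ‖T ψ‖ ^ (2:ℝ) ≤ c * (c * ‖ψ‖ ^ (2:ℝ)) := by
    rw [hTψ]
    refine Summable.tsum_le_of_sum_le hFsum (fun s => ?_)
    calc ∑ u ∈ s, ‖(inner ℂ (b u) (T ψ) : ℂ)‖ ^ (2:ℝ)
        ≤ ∑ u ∈ s, c * G u := Finset.sum_le_sum (fun u _ => hFsqle u)
      _ = c * ∑ u ∈ s, G u := by rw [Finset.mul_sum]
      _ ≤ c * (c * ‖ψ‖ ^ (2:ℝ)) := by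
          refine mul_le_mul_of_nonneg_left ?_ hc
          calc ∑ u ∈ s, G u = ∑' v, ∑ u ∈ s, k u v * Ψ v ^ (2:ℝ) :=
                (Summable.tsum_finsetSum (fun u _ => hGrowsum u)).symm
            _ ≤ ∑' v, c * Ψ v ^ (2:ℝ) := by
                refine Summable.tsum_le_tsum (fun v => ?_) ?_ (hΨsum.mul_left c)
                · rw [← Finset.sum_mul]
                  refine mul_le_mul_of_nonneg_right ?_ (Real.rpow_nonneg (hΨnn v) _)
                  exact (Summable.sum_le_tsum s (fun u _ => hknn u v) (hcolsum v)).trans (hcol v)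
                · refine Summable.of_nonneg_of_le
                    (fun v => Finset.sum_nonneg (fun u _ =>
                      mul_nonneg (hknn u v) (Real.rpow_nonneg (hΨnn v) _))) (fun v => ?_)
                    (hΨsum.mul_left c)
                  rw [← Finset.sum_mul]
                  refine mul_le_mul_of_nonneg_right ?_ (Real.rpow_nonneg (hΨnn v) _)
                  exact (Summable.sum_le_tsum s (fun u _ => hknn u v) (hcolsum v)).trans (hcol v)
            _ = c * ‖ψ‖ ^ (2:ℝ) := by rw [tsum_mul_left, hψnorm]
  -- conclude
  have h1 : ‖T ψ‖ ^ (2:ℝ) ≤ (c * ‖ψ‖) ^ (2:ℝ) := by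
    calc ‖T ψ‖ ^ (2:ℝ) ≤ c * (c * ‖ψ‖ ^ (2:ℝ)) := hmain
      _ = (c * ‖ψ‖) ^ (2:ℝ) := by
          rw [Real.mul_rpow hc (norm_nonneg _)]
          rw [Real.rpow_two, Real.rpow_two]
          ring
  have h3 : ‖T ψ‖ ^ 2 ≤ (c * ‖ψ‖) ^ 2 := by
    rw [← Real.rpow_two, ← Real.rpow_two]
    exact h1
  calc ‖T ψ‖ = Real.sqrt (‖T ψ‖ ^ 2) := (Real.sqrt_sq (norm_nonneg _)).symm
    _ ≤ Real.sqrt ((c * ‖ψ‖) ^ 2) := Real.sqrt_le_sqrt h3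
    _ = c * ‖ψ‖ := Real.sqrt_sq (by positivity)
end CTAux


set_option maxHeartbeats 1600000 in
/-- Combes–Thomas type corollary.  For a bounded self-adjoint operator `A` on
`ℓ²(ℤᵈ) ⊗ ℂⁿ` (given via an orthonormal basis `e` indexed by `(Fin d → ℤ) × Fin n`), if
`dist(z, spec A) ≥ g/2 > 0` and `S ≥ sup_x Σ_y (e^{μ |x-y|^ε} - 1) |⟨e_x, A e_y⟩|`, then
`|⟨e_x, (z - A)⁻¹ e_y⟩| ≤ (4/g) exp(-μ min{1, g/(4S)} |x-y|^ε)`. -/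
theorem stmt14 {𝓗 : Type*} [NormedAddCommGroup 𝓗] [InnerProductSpace ℂ 𝓗] [CompleteSpace 𝓗]
    (d n : ℕ)
    (e : (Fin d → ℤ) × Fin n → 𝓗)
    (he : Orthonormal ℂ e)
    (hdense : (Submodule.span ℂ (Set.range e)).topologicalClosure = ⊤)
    (A : 𝓗 →L[ℂ] 𝓗) (hA : IsSelfAdjoint A)
    (z : ℂ) (g : ℝ) (hg : 0 < g)
    (hz : ∀ w ∈ spectrum ℂ A, g / 2 ≤ ‖z - w‖)
    (μ ε : ℝ) (hμ : 0 < μ) (hε : ε ∈ Set.Ioc (0:ℝ) 1)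
    (S : ℝ)
    (hSum : ∀ x, Summable (fun y =>
      (Real.exp (μ * (∑ i, |((x.1 i : ℝ)) - ((y.1 i : ℝ))|) ^ ε) - 1) *
        ‖(inner ℂ (e x) (A (e y)) : ℂ)‖))
    (hS : ∀ x, (∑' y, (Real.exp (μ * (∑ i, |((x.1 i : ℝ)) - ((y.1 i : ℝ))|) ^ ε) - 1) *
        ‖(inner ℂ (e x) (A (e y)) : ℂ)‖) ≤ S) :
    ∀ x y, ‖(inner ℂ (e x) (Ring.inverse (z • (1 : 𝓗 →L[ℂ] 𝓗) - A) (e y)) : ℂ)‖ ≤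
      (4 / g) * Real.exp (-(μ * min 1 (g / (4 * S)) *
        (∑ i, |((x.1 i : ℝ)) - ((y.1 i : ℝ))|) ^ ε)) := by
  
  classical
  intro x0 y0
  obtain ⟨hε0, hε1⟩ := hε
  have hsp : ⊤ ≤ (Submodule.span ℂ (Set.range e)).topologicalClosure := le_of_eq hdense.symm
  set b : HilbertBasis ((Fin d → ℤ) × Fin n) ℂ 𝓗 := HilbertBasis.mk he hsp with hbdef
  have hbe : ∀ i, b i = e i := fun i => by
    have := congrFun (HilbertBasis.coe_mk he hsp) i
    exact this
  -- distance
  set dd : ((Fin d → ℤ) × Fin n) → ((Fin d → ℤ) × Fin n) → ℝ :=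
    fun u v => (∑ i, |((u.1 i : ℝ)) - ((v.1 i : ℝ))|) with hdd
  have hddnn : ∀ u v, 0 ≤ dd u v := fun u v => Finset.sum_nonneg fun i _ => abs_nonneg _
  have hddsymm : ∀ u v, dd u v = dd v u :=
    fun u v => Finset.sum_congr rfl fun i _ => abs_sub_comm _ _
  have hddtri : ∀ u v w, dd u w ≤ dd u v + dd v w := by
    intro u v w
    rw [hdd, ← Finset.sum_add_distrib]
    exact Finset.sum_le_sum fun i _ => abs_sub_le _ _ _
  have hrpow_mono : ∀ a c : ℝ, 0 ≤ a → a ≤ c → a ^ ε ≤ c ^ ε :=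
    fun a c ha h => Real.rpow_le_rpow ha h hε0.le
  have habs_rpow : ∀ a c : ℝ, 0 ≤ a → 0 ≤ c → |a ^ ε - c ^ ε| ≤ |a - c| ^ ε := by
    intro a c ha hc
    rw [abs_sub_le_iff]
    have key : ∀ p q : ℝ, 0 ≤ p → 0 ≤ q → p ^ ε - q ^ ε ≤ |p - q| ^ ε := by
      intro p q hp hq
      have h1 : p ≤ q + |p - q| := by have := le_abs_self (p - q); linarith
      have h2 : p ^ ε ≤ q ^ ε + |p - q| ^ ε :=
        (hrpow_mono _ _ hp h1).trans (ct_rpow_subadd hε0 hε1 q |p - q| hq (abs_nonneg _))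
      linarith
    refine ⟨key a c ha hc, ?_⟩
    have := key c a hc ha
    rwa [abs_sub_comm] at this
  -- nonnegativity of S
  have hexp1 : ∀ t : ℝ, 0 ≤ t → 1 ≤ Real.exp t := fun t ht => Real.one_le_exp ht
  have hterm_nn : ∀ u v, 0 ≤ (Real.exp (μ * dd u v ^ ε) - 1) * ‖(inner ℂ (e u) (A (e v)) : ℂ)‖ := by
    intro u v
    refine mul_nonneg (by
      have := hexp1 (μ * dd u v ^ ε) (mul_nonneg hμ.le (Real.rpow_nonneg (hddnn u v) _))
      linarith) (norm_nonneg _)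
  have hS0 : 0 ≤ S := le_trans (tsum_nonneg fun v => hterm_nn x0 v) (hS x0)
  set m := min 1 (g / (4 * S)) with hm
  have hm0 : 0 ≤ m := le_min zero_le_one (div_nonneg hg.le (by positivity))
  have hm1 : m ≤ 1 := min_le_left _ _
  have hmS : m * S ≤ g / 4 := by
    rcases eq_or_lt_of_le hS0 with hS0' | hS0'
    · rw [← hS0', mul_zero]; positivity
    · calc m * S ≤ (g / (4 * S)) * S :=
            mul_le_mul_of_nonneg_right (min_le_right _ _) hS0'.le
        _ = g / 4 := by field_simp
  set μ' := μ * m with hμ'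
  have hμ'0 : 0 ≤ μ' := mul_nonneg hμ.le hm0
  -- weight function
  set R0 := dd x0 y0 ^ ε with hR0
  have hR0nn : 0 ≤ R0 := Real.rpow_nonneg (hddnn _ _) _
  set w : ((Fin d → ℤ) × Fin n) → ℝ := fun v => min (dd v y0 ^ ε) R0 with hwdef
  have hwnn : ∀ v, 0 ≤ w v := fun v => le_min (Real.rpow_nonneg (hddnn _ _) _) hR0nn
  have hwx0 : w x0 = R0 := by rw [hwdef]; simp [hR0]
  have hwy0 : w y0 = 0 := by
    have h0 : dd y0 y0 = 0 := by
      rw [hdd]; simp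
    rw [hwdef]
    simp only
    rw [h0, Real.zero_rpow hε0.ne', min_eq_left hR0nn]
  have hwle : ∀ v, w v ≤ R0 := fun v => min_le_right _ _
  have hwlip : ∀ u v, |w u - w v| ≤ dd u v ^ ε := by
    intro u v
    have h1 : |w u - w v| ≤ |dd u y0 ^ ε - dd v y0 ^ ε| := ct_min_lip _ _ _
    have h2 : |dd u y0 ^ ε - dd v y0 ^ ε| ≤ |dd u y0 - dd v y0| ^ ε :=
      habs_rpow _ _ (hddnn _ _) (hddnn _ _)
    have h3 : |dd u y0 - dd v y0| ≤ dd u v := by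
      rw [abs_sub_le_iff]
      constructor
      · have := hddtri u v y0; linarith
      · have := hddtri v u y0
        have h4 := hddsymm u v
        linarith
    exact h1.trans (h2.trans (hrpow_mono _ _ (abs_nonneg _) h3))
  -- exp scaling
  have hexp_scale : ∀ t : ℝ, 0 ≤ t → Real.exp (μ' * t) - 1 ≤ m * (Real.exp (μ * t) - 1) := by
    intro t ht
    have h1 : Real.exp (μ' * t) = (Real.exp (μ * t)) ^ m := by
      rw [← Real.exp_mul]
      congr 1
      rw [hμ']; ring
    have hE : 1 ≤ Real.exp (μ * t) := hexp1 _ (mul_nonneg hμ.le ht)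
    have h2 : (Real.exp (μ * t)) ^ m ≤ 1 + m * (Real.exp (μ * t) - 1) := by
      have h3 := rpow_one_add_le_one_add_mul_self
        (s := Real.exp (μ * t) - 1) (by linarith) hm0 hm1
      have h4 : (1 : ℝ) + (Real.exp (μ * t) - 1) = Real.exp (μ * t) := by ring
      rwa [h4] at h3
    rw [h1]
    linarith
  -- kernel
  set a : _ → _ → ℂ := fun u v => (inner ℂ (e u) (A (e v)) : ℂ) with ha
  set kk : _ → _ → ℝ := fun u v => (Real.exp (μ * dd u v ^ ε) - 1) * ‖a u v‖ with hkk
  have hkknn : ∀ u v, 0 ≤ kk u v := fun u v => hterm_nn u v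
  have hasym : ∀ u v, ‖a u v‖ = ‖a v u‖ := by
    intro u v
    have h1 : a u v = (starRingEnd ℂ) (a v u) := by
      rw [ha]
      simp only
      rw [← ContinuousLinearMap.adjoint_inner_left A (e v) (e u), hA.adjoint_eq,
        ← inner_conj_symm]
    rw [h1, RCLike.norm_conj]
  have hkksym : ∀ u v, kk u v = kk v u := by
    intro u v
    rw [hkk]
    simp only
    rw [hasym u v, hddsymm u v]
  -- diagonal operators
  set fD : _ → ℂ := fun v => ((Real.exp (μ' * w v) : ℝ) : ℂ) with hfD
  set fD' : _ → ℂ := fun v => ((Real.exp (-(μ' * w v)) : ℝ) : ℂ) with hfD'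
  have hfDle : ∀ v, ‖fD v‖ ≤ Real.exp (μ' * R0) := by
    intro v
    rw [hfD]
    simp only [Complex.norm_real, Real.norm_eq_abs, abs_of_pos (Real.exp_pos _)]
    exact Real.exp_le_exp.2 (mul_le_mul_of_nonneg_left (hwle v) hμ'0)
  have hfD'le : ∀ v, ‖fD' v‖ ≤ 1 := by
    intro v
    rw [hfD']
    simp only [Complex.norm_real, Real.norm_eq_abs, abs_of_pos (Real.exp_pos _)]
    exact Real.exp_le_one_iff.2 (by simp [hwnn v, hμ'0]; positivity)
  obtain ⟨D, hDnorm, hD⟩ := diag_exists b fD (Real.exp (μ' * R0)) (Real.exp_pos _).le hfDle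
  obtain ⟨D', hD'norm, hD'⟩ := diag_exists b fD' 1 zero_le_one hfD'le
  have hff' : ∀ i, fD i * fD' i = 1 := by
    intro i
    rw [hfD, hfD']
    rw [← Complex.ofReal_mul, ← Real.exp_add]
    simp
  have hf'f : ∀ i, fD' i * fD i = 1 := fun i => by rw [mul_comm]; exact hff' i
  have hDD' : D * D' = (1 : 𝓗 →L[ℂ] 𝓗) := by
    refine ContinuousLinearMap.ext fun ψ => b.repr.injective (lp.ext (funext fun i => ?_))
    rw [ContinuousLinearMap.mul_apply, hD, hD', ContinuousLinearMap.one_apply, ← mul_assoc,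
      hff' i, one_mul]
  have hD'D : D' * D = (1 : 𝓗 →L[ℂ] 𝓗) := by
    refine ContinuousLinearMap.ext fun ψ => b.repr.injective (lp.ext (funext fun i => ?_))
    rw [ContinuousLinearMap.mul_apply, hD', hD, ContinuousLinearMap.one_apply, ← mul_assoc,
      hf'f i, one_mul]
  -- inner product action of diagonal operators
  have hDinner : ∀ χ u, (inner ℂ (b u) (D χ) : ℂ) = fD u * inner ℂ (b u) χ := by
    intro χ u
    rw [← b.repr_apply_apply, hD, b.repr_apply_apply]
  have hD'inner : ∀ χ u, (inner ℂ (b u) (D' χ) : ℂ) = fD' u * inner ℂ (b u) χ := by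
    intro χ u
    rw [← b.repr_apply_apply, hD', b.repr_apply_apply]
  have hDbasis : ∀ v, D (b v) = fD v • b v := by
    intro v
    refine b.repr.injective (lp.ext (funext fun i => ?_))
    rw [hD, map_smul, b.repr_self]
    rcases eq_or_ne i v with rfl | hiv
    · simp [lp.coeFn_smul, lp.single_apply, Pi.single_apply]
    · simp [lp.coeFn_smul, lp.single_apply, Pi.single_apply, hiv]
  have hD'basis : ∀ v, D' (b v) = fD' v • b v := by
    intro v
    refine b.repr.injective (lp.ext (funext fun i => ?_))
    rw [hD', map_smul, b.repr_self]
    rcases eq_or_ne i v with rfl | hiv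
    · simp [lp.coeFn_smul, lp.single_apply, Pi.single_apply]
    · simp [lp.coeFn_smul, lp.single_apply, Pi.single_apply, hiv]
  -- resolvent
  obtain ⟨U, hU, hUnorm⟩ := resolvent_unit A hA.isStarNormal z g hg hz
  -- perturbation K
  set K : 𝓗 →L[ℂ] 𝓗 := D * A * D' - A with hK
  have hKmat : ∀ u v, (inner ℂ (b u) (K (b v)) : ℂ) = (fD u * fD' v - 1) * a u v := by
    intro u v
    rw [hK]
    rw [ContinuousLinearMap.sub_apply, inner_sub_right, ContinuousLinearMap.mul_apply,
      ContinuousLinearMap.mul_apply, hD'basis v, map_smul, map_smul, inner_smul_right,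
      hDinner, ha]
    simp only [hbe]
    ring
  have hKbound : ∀ u v, ‖(inner ℂ (b u) (K (b v)) : ℂ)‖ ≤ m * kk u v := by
    intro u v
    rw [hKmat, norm_mul]
    have hcoe : fD u * fD' v = ((Real.exp (μ' * (w u - w v)) : ℝ) : ℂ) := by
      rw [hfD, hfD']
      simp only
      rw [← Complex.ofReal_mul, ← Real.exp_add]
      norm_num
      ring_nf
    have h1 : ‖fD u * fD' v - 1‖ ≤ Real.exp (μ' * dd u v ^ ε) - 1 := by
      rw [hcoe]
      have hc2 : ((Real.exp (μ' * (w u - w v)) : ℝ) : ℂ) - 1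
          = ((Real.exp (μ' * (w u - w v)) - 1 : ℝ) : ℂ) := by push_cast; ring
      rw [hc2, Complex.norm_real, Real.norm_eq_abs]
      calc |Real.exp (μ' * (w u - w v)) - 1| ≤ Real.exp |μ' * (w u - w v)| - 1 :=
            ct_abs_exp_sub_one _
        _ ≤ Real.exp (μ' * dd u v ^ ε) - 1 := by
            have h3 : |μ' * (w u - w v)| = μ' * |w u - w v| := by
              rw [abs_mul, abs_of_nonneg hμ'0]
            have h4 : μ' * |w u - w v| ≤ μ' * dd u v ^ ε :=
              mul_le_mul_of_nonneg_left (hwlip u v) hμ'0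
            have := Real.exp_le_exp.2 (h3 ▸ h4)
            linarith
    have h2 : Real.exp (μ' * dd u v ^ ε) - 1 ≤ m * (Real.exp (μ * dd u v ^ ε) - 1) :=
      hexp_scale _ (Real.rpow_nonneg (hddnn u v) _)
    calc ‖fD u * fD' v - 1‖ * ‖a u v‖
        ≤ (m * (Real.exp (μ * dd u v ^ ε) - 1)) * ‖a u v‖ :=
          mul_le_mul_of_nonneg_right (h1.trans h2) (norm_nonneg _)
      _ = m * kk u v := by rw [hkk]; ring
  -- Schur bound
  have hsummul : ∀ u, Summable (fun v => m * kk u v) := fun u => (hSum u).mul_left m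
  have hkS : ∀ u, ∑' v, kk u v ≤ S := fun u => hS u
  have hrow : ∀ u, ∑' v, m * kk u v ≤ g / 4 := by
    intro u
    rw [tsum_mul_left]
    calc m * ∑' v, kk u v ≤ m * S := mul_le_mul_of_nonneg_left (hkS u) hm0
      _ ≤ g / 4 := hmS
  have hcolsum : ∀ v, Summable (fun u => m * kk u v) := by
    intro v
    exact (hsummul v).congr fun u => by rw [hkksym v u]
  have hcol : ∀ v, ∑' u, m * kk u v ≤ g / 4 := by
    intro v
    calc (∑' u, m * kk u v) = ∑' u, m * kk v u := tsum_congr fun u => by rw [hkksym u v]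
      _ ≤ g / 4 := hrow v
  have hKnorm : ‖K‖ ≤ g / 4 :=
    schur_bound b K (fun u v => m * kk u v)
      (fun u v => mul_nonneg hm0 (hkknn u v)) hKbound (g / 4) (by positivity)
      hsummul hrow hcolsum hcol
  -- construct the unit W
  have hhalf : ‖K * ((U⁻¹ : (𝓗 →L[ℂ] 𝓗)ˣ) : 𝓗 →L[ℂ] 𝓗)‖ ≤ 1 / 2 := by
    calc ‖K * ((U⁻¹ : (𝓗 →L[ℂ] 𝓗)ˣ) : 𝓗 →L[ℂ] 𝓗)‖
        ≤ ‖K‖ * ‖((U⁻¹ : (𝓗 →L[ℂ] 𝓗)ˣ) : 𝓗 →L[ℂ] 𝓗)‖ := norm_mul_le _ _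
      _ ≤ (g / 4) * (2 / g) := mul_le_mul hKnorm hUnorm (norm_nonneg _) (by positivity)
      _ = 1 / 2 := by field_simp; ring
  have hKU : ‖K * ((U⁻¹ : (𝓗 →L[ℂ] 𝓗)ˣ) : 𝓗 →L[ℂ] 𝓗)‖ < 1 :=
    lt_of_le_of_lt hhalf (by norm_num)
  set V := Units.oneSub (K * ((U⁻¹ : (𝓗 →L[ℂ] 𝓗)ˣ) : 𝓗 →L[ℂ] 𝓗)) hKU with hV
  have hVval : (V : 𝓗 →L[ℂ] 𝓗) = 1 - K * ((U⁻¹ : (𝓗 →L[ℂ] 𝓗)ˣ) : 𝓗 →L[ℂ] 𝓗) := rfl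
  have hVinvnorm : ‖((V⁻¹ : (𝓗 →L[ℂ] 𝓗)ˣ) : 𝓗 →L[ℂ] 𝓗)‖ ≤ 2 := by
    have h1 : (V : 𝓗 →L[ℂ] 𝓗) * ((V⁻¹ : (𝓗 →L[ℂ] 𝓗)ˣ) : 𝓗 →L[ℂ] 𝓗) = 1 := V.mul_inv
    rw [hVval, sub_mul, one_mul, sub_eq_iff_eq_add] at h1
    have h2 : ‖((V⁻¹ : (𝓗 →L[ℂ] 𝓗)ˣ) : 𝓗 →L[ℂ] 𝓗)‖
        ≤ 1 + (1/2) * ‖((V⁻¹ : (𝓗 →L[ℂ] 𝓗)ˣ) : 𝓗 →L[ℂ] 𝓗)‖ := by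
      calc ‖((V⁻¹ : (𝓗 →L[ℂ] 𝓗)ˣ) : 𝓗 →L[ℂ] 𝓗)‖
          = ‖(1 : 𝓗 →L[ℂ] 𝓗) + K * ((U⁻¹ : (𝓗 →L[ℂ] 𝓗)ˣ) : 𝓗 →L[ℂ] 𝓗) *
              ((V⁻¹ : (𝓗 →L[ℂ] 𝓗)ˣ) : 𝓗 →L[ℂ] 𝓗)‖ := by rw [← h1]
        _ ≤ ‖(1 : 𝓗 →L[ℂ] 𝓗)‖ + ‖K * ((U⁻¹ : (𝓗 →L[ℂ] 𝓗)ˣ) : 𝓗 →L[ℂ] 𝓗)‖ *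
              ‖((V⁻¹ : (𝓗 →L[ℂ] 𝓗)ˣ) : 𝓗 →L[ℂ] 𝓗)‖ :=
            (norm_add_le _ _).trans (add_le_add le_rfl (norm_mul_le _ _))
        _ ≤ 1 + (1/2) * ‖((V⁻¹ : (𝓗 →L[ℂ] 𝓗)ˣ) : 𝓗 →L[ℂ] 𝓗)‖ := by
            refine add_le_add ?_ (mul_le_mul_of_nonneg_right hhalf (norm_nonneg _))
            calc ‖(1 : 𝓗 →L[ℂ] 𝓗)‖ = ‖(ContinuousLinearMap.id ℂ 𝓗)‖ := rfl
              _ ≤ 1 := ContinuousLinearMap.norm_id_le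
    linarith
  set W := V * U with hW
  have hWval : (W : 𝓗 →L[ℂ] 𝓗) = z • (1 : 𝓗 →L[ℂ] 𝓗) - A - K := by
    rw [hW, Units.val_mul, hVval, sub_mul, one_mul, mul_assoc, Units.inv_mul, mul_one, hU]
  have hWinvnorm : ‖((W⁻¹ : (𝓗 →L[ℂ] 𝓗)ˣ) : 𝓗 →L[ℂ] 𝓗)‖ ≤ 4 / g := by
    rw [hW, mul_inv_rev, Units.val_mul]
    calc ‖((U⁻¹ : (𝓗 →L[ℂ] 𝓗)ˣ) : 𝓗 →L[ℂ] 𝓗) * ((V⁻¹ : (𝓗 →L[ℂ] 𝓗)ˣ) : 𝓗 →L[ℂ] 𝓗)‖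
        ≤ ‖((U⁻¹ : (𝓗 →L[ℂ] 𝓗)ˣ) : 𝓗 →L[ℂ] 𝓗)‖ * ‖((V⁻¹ : (𝓗 →L[ℂ] 𝓗)ˣ) : 𝓗 →L[ℂ] 𝓗)‖ :=
          norm_mul_le _ _
      _ ≤ (2 / g) * 2 := mul_le_mul hUnorm hVinvnorm (norm_nonneg _) (by positivity)
      _ = 4 / g := by field_simp; ring
  -- conjugation identity via the unit group
  set DU : (𝓗 →L[ℂ] 𝓗)ˣ := ⟨D, D', hDD', hD'D⟩ with hDU
  have hWconj : W = DU * U * DU⁻¹ := by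
    refine Units.ext ?_
    show ((W : (𝓗 →L[ℂ] 𝓗)ˣ) : 𝓗 →L[ℂ] 𝓗) = D * (U : 𝓗 →L[ℂ] 𝓗) * D'
    have hAK : A + K = D * A * D' := by rw [hK]; abel
    have hzD : D * (z • (1 : 𝓗 →L[ℂ] 𝓗)) * D' = z • (1 : 𝓗 →L[ℂ] 𝓗) := by
      rw [mul_smul_comm, mul_one, smul_mul_assoc, hDD']
    calc ((W : (𝓗 →L[ℂ] 𝓗)ˣ) : 𝓗 →L[ℂ] 𝓗) = z • (1 : 𝓗 →L[ℂ] 𝓗) - A - K := hWval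
      _ = z • (1 : 𝓗 →L[ℂ] 𝓗) - (A + K) := by abel
      _ = D * (z • (1 : 𝓗 →L[ℂ] 𝓗)) * D' - D * A * D' := by rw [hAK, hzD]
      _ = D * (z • (1 : 𝓗 →L[ℂ] 𝓗) - A) * D' := by rw [mul_sub, sub_mul]
      _ = D * (U : 𝓗 →L[ℂ] 𝓗) * D' := by rw [hU]
  have hUinvW : ((U⁻¹ : (𝓗 →L[ℂ] 𝓗)ˣ) : 𝓗 →L[ℂ] 𝓗)
      = D' * ((W⁻¹ : (𝓗 →L[ℂ] 𝓗)ˣ) : 𝓗 →L[ℂ] 𝓗) * D := by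
    have hun : U⁻¹ = DU⁻¹ * W⁻¹ * DU := by
      rw [hWconj]
      group
    rw [hun, Units.val_mul, Units.val_mul]
    rfl
  -- final computation
  have hDe_y0 : D (e y0) = e y0 := by
    have h1 := hDbasis y0
    rw [hbe] at h1
    rw [h1, hfD]
    simp only
    rw [hwy0, mul_zero, Real.exp_zero, Complex.ofReal_one, one_smul]
  have hRinv : Ring.inverse (z • (1 : 𝓗 →L[ℂ] 𝓗) - A) = ((U⁻¹ : (𝓗 →L[ℂ] 𝓗)ˣ) : 𝓗 →L[ℂ] 𝓗) := by
    rw [← hU, Ring.inverse_unit]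
  have hfinal : (inner ℂ (e x0) ((Ring.inverse (z • (1 : 𝓗 →L[ℂ] 𝓗) - A)) (e y0)) : ℂ)
      = fD' x0 * inner ℂ (e x0) (((W⁻¹ : (𝓗 →L[ℂ] 𝓗)ˣ) : 𝓗 →L[ℂ] 𝓗) (e y0)) := by
    rw [hRinv, hUinvW, ContinuousLinearMap.mul_apply, ContinuousLinearMap.mul_apply, hDe_y0]
    rw [← hbe x0, hD'inner, hbe x0]
  rw [hfinal, norm_mul]
  have hn1 : ‖fD' x0‖ = Real.exp (-(μ' * R0)) := by
    rw [hfD']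
    simp only [Complex.norm_real, Real.norm_eq_abs, abs_of_pos (Real.exp_pos _)]
    rw [hwx0]
  have hn2 : ‖(inner ℂ (e x0) (((W⁻¹ : (𝓗 →L[ℂ] 𝓗)ˣ) : 𝓗 →L[ℂ] 𝓗) (e y0)) : ℂ)‖ ≤ 4 / g := by
    calc ‖(inner ℂ (e x0) (((W⁻¹ : (𝓗 →L[ℂ] 𝓗)ˣ) : 𝓗 →L[ℂ] 𝓗) (e y0)) : ℂ)‖
        ≤ ‖e x0‖ * ‖((W⁻¹ : (𝓗 →L[ℂ] 𝓗)ˣ) : 𝓗 →L[ℂ] 𝓗) (e y0)‖ := norm_inner_le_norm _ _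
      _ ≤ ‖e x0‖ * (‖((W⁻¹ : (𝓗 →L[ℂ] 𝓗)ˣ) : 𝓗 →L[ℂ] 𝓗)‖ * ‖e y0‖) :=
          mul_le_mul_of_nonneg_left (ContinuousLinearMap.le_opNorm _ _) (norm_nonneg _)
      _ = ‖((W⁻¹ : (𝓗 →L[ℂ] 𝓗)ˣ) : 𝓗 →L[ℂ] 𝓗)‖ := by rw [he.1 x0, he.1 y0]; ring
      _ ≤ 4 / g := hWinvnorm
  calc ‖fD' x0‖ * ‖(inner ℂ (e x0) (((W⁻¹ : (𝓗 →L[ℂ] 𝓗)ˣ) : 𝓗 →L[ℂ] 𝓗) (e y0)) : ℂ)‖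
      ≤ Real.exp (-(μ' * R0)) * (4 / g) := by
        rw [hn1]
        exact mul_le_mul_of_nonneg_left hn2 (Real.exp_pos _).le
    _ = (4 / g) * Real.exp (-(μ * min 1 (g / (4 * S)) *
        (∑ i, |((x0.1 i : ℝ)) - ((y0.1 i : ℝ))|) ^ ε)) := by
        rw [mul_comm]
end

section
/- Let P₁, P₂ be orthogonal projections on a Hilbert space H with Γ an antiunitary involution such that ΓPᵢΓ = 1 − Pᵢ (basis projections). Then the intersections satisfy Γ(ran P₁ ∩ ran(1 − P₂)) = ran(1 − P₁) ∩ ran P₂; in particular dim(P₁ ∧ P₂^⊥) = dim(P₁^⊥ ∧ P₂), so the ℤ₂-index σ(P₁, P₂) := (−1)^{dim(P₁ ∧ P₂^⊥)} is symmetric: σ(P₁, P₂) = σ(P₂, P₁). -/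
/-- For basis projections `P₁, P₂` (orthogonal projections with
`ΓPᵢΓ = 1 - Pᵢ`), `Γ` maps `ran P₁ ∩ ran (1 - P₂)` onto `ran (1 - P₁) ∩ ran P₂`; in
particular the dimensions agree and the ℤ₂-index
`σ(P₁, P₂) = (-1)^{dim(P₁ ∧ P₂^⊥)}` is symmetric. -/
theorem stmt17 {H : Type*} [NormedAddCommGroup H] [InnerProductSpace ℂ H] [CompleteSpace H]
    (Γ : H → H)
    (hΓadd : ∀ x y, Γ (x + y) = Γ x + Γ y)
    (hΓsmul : ∀ (c : ℂ) (x : H), Γ (c • x) = (starRingEnd ℂ) c • Γ x)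
    (hΓinv : ∀ x, Γ (Γ x) = x)
    (hΓinner : ∀ x y, (inner ℂ (Γ x) (Γ y) : ℂ) = inner ℂ y x)
    (P₁ P₂ : H →L[ℂ] H)
    (hP₁idem : P₁ ∘L P₁ = P₁) (hP₁sa : IsSelfAdjoint P₁)
    (hP₂idem : P₂ ∘L P₂ = P₂) (hP₂sa : IsSelfAdjoint P₂)
    (hP₁basis : ∀ x, Γ (P₁ (Γ x)) = x - P₁ x)
    (hP₂basis : ∀ x, Γ (P₂ (Γ x)) = x - P₂ x)
    (hfin₁ : FiniteDimensional ℂ ↥(LinearMap.range (P₁ : H →ₗ[ℂ] H) ⊓ LinearMap.range ((1 - P₂ : H →L[ℂ] H) : H →ₗ[ℂ] H)))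
    (hfin₂ : FiniteDimensional ℂ ↥(LinearMap.range (P₂ : H →ₗ[ℂ] H) ⊓ LinearMap.range ((1 - P₁ : H →L[ℂ] H) : H →ₗ[ℂ] H))) :
    Γ '' ((LinearMap.range (P₁ : H →ₗ[ℂ] H) : Set H) ∩ (LinearMap.range ((1 - P₂ : H →L[ℂ] H) : H →ₗ[ℂ] H) : Set H))
        = (LinearMap.range ((1 - P₁ : H →L[ℂ] H) : H →ₗ[ℂ] H) : Set H) ∩ (LinearMap.range (P₂ : H →ₗ[ℂ] H) : Set H) ∧
    Module.finrank ℂ ↥(LinearMap.range (P₁ : H →ₗ[ℂ] H) ⊓ LinearMap.range ((1 - P₂ : H →L[ℂ] H) : H →ₗ[ℂ] H))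
        = Module.finrank ℂ ↥(LinearMap.range (P₂ : H →ₗ[ℂ] H) ⊓ LinearMap.range ((1 - P₁ : H →L[ℂ] H) : H →ₗ[ℂ] H)) ∧
    ((-1 : ℤ) ^ Module.finrank ℂ ↥(LinearMap.range (P₁ : H →ₗ[ℂ] H) ⊓ LinearMap.range ((1 - P₂ : H →L[ℂ] H) : H →ₗ[ℂ] H))
        = (-1 : ℤ) ^ Module.finrank ℂ ↥(LinearMap.range (P₂ : H →ₗ[ℂ] H) ⊓ LinearMap.range ((1 - P₁ : H →L[ℂ] H) : H →ₗ[ℂ] H))) := by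
  -- Γ sends 0 to 0 and commutes with subtraction
  have hΓ0 : Γ 0 = 0 := by
    have h := hΓadd 0 0
    rw [add_zero] at h
    exact right_eq_add.mp h
  -- membership criterion for ranges of idempotents
  have hmem : ∀ (P : H →L[ℂ] H), P ∘L P = P → ∀ x : H,
      (x ∈ LinearMap.range (P : H →ₗ[ℂ] H) ↔ P x = x) := by
    intro P hP x
    constructor
    · rintro ⟨y, rfl⟩
      exact DFunLike.congr_fun hP y
    · intro h
      exact ⟨x, h⟩
  -- idempotency of the complements
  have hc₁ : (1 - P₁) ∘L (1 - P₁) = 1 - P₁ := by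
    ext x
    simp [ContinuousLinearMap.comp_apply, ContinuousLinearMap.sub_apply,
      map_sub, DFunLike.congr_fun hP₁idem x]
  have hc₂ : (1 - P₂) ∘L (1 - P₂) = 1 - P₂ := by
    ext x
    simp [ContinuousLinearMap.comp_apply, ContinuousLinearMap.sub_apply,
      map_sub, DFunLike.congr_fun hP₂idem x]
  -- membership in range of (1 - P) ↔ P x = 0
  have hmemc : ∀ (P : H →L[ℂ] H), (1 - P) ∘L (1 - P) = 1 - P → ∀ x : H,
      (x ∈ LinearMap.range ((1 - P : H →L[ℂ] H) : H →ₗ[ℂ] H) ↔ P x = 0) := by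
    intro P hP x
    rw [hmem _ hP x]
    constructor
    · intro h
      have : x - P x = x := by simpa using h
      have := sub_eq_self.mp this
      exact this
    · intro h
      simp [ContinuousLinearMap.sub_apply, h]
  -- the key swap identities
  have hswap₁ : ∀ z, P₁ (Γ z) = Γ z - Γ (P₁ z) := by
    intro z
    have A := hP₁basis (Γ z)
    rw [hΓinv z] at A
    rw [eq_sub_iff_add_eq] at A ⊢
    rw [add_comm]; exact A
  have hswap₂ : ∀ z, P₂ (Γ z) = Γ z - Γ (P₂ z) := by
    intro z
    have A := hP₂basis (Γ z)
    rw [hΓinv z] at A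
    rw [eq_sub_iff_add_eq] at A ⊢
    rw [add_comm]; exact A
  have hfix₁ : ∀ z, P₁ z = z → P₁ (Γ z) = 0 := fun z h => by
    rw [hswap₁ z, h, sub_self]
  have hker₁ : ∀ z, P₁ z = 0 → P₁ (Γ z) = Γ z := fun z h => by
    rw [hswap₁ z, h, hΓ0, sub_zero]
  have hfix₂ : ∀ z, P₂ z = z → P₂ (Γ z) = 0 := fun z h => by
    rw [hswap₂ z, h, sub_self]
  have hker₂ : ∀ z, P₂ z = 0 → P₂ (Γ z) = Γ z := fun z h => by
    rw [hswap₂ z, h, hΓ0, sub_zero]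
  -- the set equality
  have hset : Γ '' ((LinearMap.range (P₁ : H →ₗ[ℂ] H) : Set H) ∩ (LinearMap.range ((1 - P₂ : H →L[ℂ] H) : H →ₗ[ℂ] H) : Set H))
      = (LinearMap.range ((1 - P₁ : H →L[ℂ] H) : H →ₗ[ℂ] H) : Set H) ∩ (LinearMap.range (P₂ : H →ₗ[ℂ] H) : Set H) := by
    ext y
    constructor
    · rintro ⟨x, ⟨hx1, hx2⟩, rfl⟩
      have h1 : P₁ x = x := (hmem _ hP₁idem x).mp hx1
      have h2 : P₂ x = 0 := (hmemc _ hc₂ x).mp hx2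
      exact ⟨(hmemc _ hc₁ (Γ x)).mpr (hfix₁ x h1),
        (hmem _ hP₂idem (Γ x)).mpr (hker₂ x h2)⟩
    · rintro ⟨hy1, hy2⟩
      have h1 : P₁ y = 0 := (hmemc _ hc₁ y).mp hy1
      have h2 : P₂ y = y := (hmem _ hP₂idem y).mp hy2
      refine ⟨Γ y, ⟨(hmem _ hP₁idem (Γ y)).mpr (hker₁ y h1),
        (hmemc _ hc₂ (Γ y)).mpr (hfix₂ y h2)⟩, hΓinv y⟩
  refine ⟨hset, ?_, ?_⟩
  · -- finrank equality via a conjugate-linear additive equivalence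
    have hmemS₁ : ∀ x : H, x ∈ LinearMap.range (P₁ : H →ₗ[ℂ] H) ⊓ LinearMap.range ((1 - P₂ : H →L[ℂ] H) : H →ₗ[ℂ] H) ↔
        P₁ x = x ∧ P₂ x = 0 := by
      intro x
      rw [Submodule.mem_inf, hmem _ hP₁idem x, hmemc _ hc₂ x]
    have hmemS₂ : ∀ x : H, x ∈ LinearMap.range (P₂ : H →ₗ[ℂ] H) ⊓ LinearMap.range ((1 - P₁ : H →L[ℂ] H) : H →ₗ[ℂ] H) ↔
        P₂ x = x ∧ P₁ x = 0 := by
      intro x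
      rw [Submodule.mem_inf, hmem _ hP₂idem x, hmemc _ hc₁ x]
    set S₁ := LinearMap.range (P₁ : H →ₗ[ℂ] H) ⊓ LinearMap.range ((1 - P₂ : H →L[ℂ] H) : H →ₗ[ℂ] H) with hS₁
    set S₂ := LinearMap.range (P₂ : H →ₗ[ℂ] H) ⊓ LinearMap.range ((1 - P₁ : H →L[ℂ] H) : H →ₗ[ℂ] H) with hS₂
    let j : ↥S₁ ≃+ ↥S₂ :=
      { toFun := fun x => ⟨Γ x.1, by
          obtain ⟨h1, h2⟩ := (hmemS₁ x.1).mp x.2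
          exact (hmemS₂ (Γ x.1)).mpr ⟨hker₂ _ h2, hfix₁ _ h1⟩⟩
        invFun := fun y => ⟨Γ y.1, by
          obtain ⟨h1, h2⟩ := (hmemS₂ y.1).mp y.2
          exact (hmemS₁ (Γ y.1)).mpr ⟨hker₁ _ h2, hfix₂ _ h1⟩⟩
        left_inv := fun x => Subtype.ext (hΓinv x.1)
        right_inv := fun y => Subtype.ext (hΓinv y.1)
        map_add' := fun x y => Subtype.ext (hΓadd x.1 y.1) }
    have hrank : Module.rank ℂ ↥S₁ = Module.rank ℂ ↥S₂ := by
      refine _root_.rank_eq_of_equiv_equiv (⟨(starRingEnd ℂ), map_zero _⟩ : ZeroHom ℂ ℂ) j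
        ?_ ?_
      · exact Complex.conjCLE.bijective
      · intro r m
        exact Subtype.ext (hΓsmul r m.1)
    simpa only [Module.finrank] using congrArg Cardinal.toNat hrank
  · -- sign equality follows from the finrank equality
    have hmemS₁ : ∀ x : H, x ∈ LinearMap.range (P₁ : H →ₗ[ℂ] H) ⊓ LinearMap.range ((1 - P₂ : H →L[ℂ] H) : H →ₗ[ℂ] H) ↔
        P₁ x = x ∧ P₂ x = 0 := by
      intro x
      rw [Submodule.mem_inf, hmem _ hP₁idem x, hmemc _ hc₂ x]
    have hmemS₂ : ∀ x : H, x ∈ LinearMap.range (P₂ : H →ₗ[ℂ] H) ⊓ LinearMap.range ((1 - P₁ : H →L[ℂ] H) : H →ₗ[ℂ] H) ↔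
        P₂ x = x ∧ P₁ x = 0 := by
      intro x
      rw [Submodule.mem_inf, hmem _ hP₂idem x, hmemc _ hc₁ x]
    let j : ↥(LinearMap.range (P₁ : H →ₗ[ℂ] H) ⊓ LinearMap.range ((1 - P₂ : H →L[ℂ] H) : H →ₗ[ℂ] H)) ≃+
        ↥(LinearMap.range (P₂ : H →ₗ[ℂ] H) ⊓ LinearMap.range ((1 - P₁ : H →L[ℂ] H) : H →ₗ[ℂ] H)) :=
      { toFun := fun x => ⟨Γ x.1, by
          obtain ⟨h1, h2⟩ := (hmemS₁ x.1).mp x.2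
          exact (hmemS₂ (Γ x.1)).mpr ⟨hker₂ _ h2, hfix₁ _ h1⟩⟩
        invFun := fun y => ⟨Γ y.1, by
          obtain ⟨h1, h2⟩ := (hmemS₂ y.1).mp y.2
          exact (hmemS₁ (Γ y.1)).mpr ⟨hker₁ _ h2, hfix₂ _ h1⟩⟩
        left_inv := fun x => Subtype.ext (hΓinv x.1)
        right_inv := fun y => Subtype.ext (hΓinv y.1)
        map_add' := fun x y => Subtype.ext (hΓadd x.1 y.1) }
    have hrank := _root_.rank_eq_of_equiv_equiv (⟨(starRingEnd ℂ), map_zero _⟩ : ZeroHom ℂ ℂ) j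
      Complex.conjCLE.bijective (fun r m => Subtype.ext (hΓsmul r m.1))
    have hfr : Module.finrank ℂ ↥(LinearMap.range (P₁ : H →ₗ[ℂ] H) ⊓ LinearMap.range ((1 - P₂ : H →L[ℂ] H) : H →ₗ[ℂ] H))
        = Module.finrank ℂ ↥(LinearMap.range (P₂ : H →ₗ[ℂ] H) ⊓ LinearMap.range ((1 - P₁ : H →L[ℂ] H) : H →ₗ[ℂ] H)) := by
      simpa only [Module.finrank] using congrArg Cardinal.toNat hrank
    rw [hfr]
end
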